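/- Let M = [a,b) and N = [c,d) be interval modules with 0 ≤ a ≤ c < b ≤ d, a < b, c < d (overlapping supports, neither contained in the other). Then S_{M,N} = [max{c−a, d−b}, d−a) and S_{N,M} = [0, b−c). -/

import Mathlib

open scoped NNReal

/-- A persistence module: a functor from `[0,∞)` to real vector spaces. -/
structure PM where
  V : ℝ≥0 → Type
  [grp : ∀ x, AddCommGroup (V x)]
  [mod : ∀ x, Module ℝ (V x)]
  map : ∀ {x y : ℝ≥0}, x ≤ y → (V x →ₗ[ℝ] V y)
  map_id : ∀ x : ℝ≥0, map (le_refl x) = LinearMap.id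
  map_comp : ∀ {x y z : ℝ≥0} (h1 : x ≤ y) (h2 : y ≤ z),
    (map h2).comp (map h1) = map (h1.trans h2)

attribute [instance] PM.grp PM.mod

/-- A morphism of persistence modules. -/
structure PM.Hom (M N : PM) where
  app : ∀ x : ℝ≥0, M.V x →ₗ[ℝ] N.V x
  comm : ∀ {x y : ℝ≥0} (h : x ≤ y), (app y).comp (M.map h) = (N.map h).comp (app x)

/-- The shifted module `M·ε`. -/
def PM.shift (M : PM) (ε : ℝ≥0) : PM where
  V x := M.V (x + ε)
  grp x := inferInstance
  mod x := inferInstance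
  map h := M.map (add_le_add_left h ε)
  map_id x := M.map_id (x + ε)
  map_comp h1 h2 := M.map_comp _ _

noncomputable def intervalSub (α β : ℝ) (x : ℝ≥0) : Submodule ℝ ℝ :=
  if α ≤ (x : ℝ) ∧ (x : ℝ) < β then ⊤ else ⊥

/-- The interval module `[α,β)`. -/
noncomputable def intervalModule (α β : ℝ) : PM where
  V x := ↥(intervalSub α β x)
  grp x := inferInstance
  mod x := inferInstance
  map {x y} h := LinearMap.codRestrict _
      ((if α ≤ (x : ℝ) ∧ (y : ℝ) < β then (1 : ℝ) else 0) • (intervalSub α β x).subtype)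
      (by
        intro v
        by_cases hy : α ≤ (y : ℝ) ∧ (y : ℝ) < β
        · simp [intervalSub, hy]
        · have hc : ¬(α ≤ (x : ℝ) ∧ (y : ℝ) < β) := by
            intro hc
            exact hy ⟨le_trans hc.1 (by exact_mod_cast h), hc.2⟩
          simp only [if_neg hc, zero_smul, LinearMap.zero_apply, Submodule.zero_mem])
  map_id x := by
    ext v
    by_cases hx : α ≤ (x : ℝ) ∧ (x : ℝ) < β
    · simp [hx]
    · have hv : (v : ℝ) = 0 := by
        have h2 := v.2
        simp only [intervalSub, if_neg hx, Submodule.mem_bot] at h2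
        exact h2
      simp [hx, hv]
  map_comp {x y z} h1 h2 := by
    ext v
    by_cases hC : α ≤ (x : ℝ) ∧ (z : ℝ) < β
    · have hA : α ≤ (x : ℝ) ∧ (y : ℝ) < β :=
        ⟨hC.1, lt_of_le_of_lt (by exact_mod_cast h2) hC.2⟩
      have hB : α ≤ (y : ℝ) ∧ (z : ℝ) < β :=
        ⟨le_trans hC.1 (by exact_mod_cast h1), hC.2⟩
      simp [hA, hB, hC]
    · rcases not_and_or.mp hC with hx | hz
      · have hA : ¬(α ≤ (x : ℝ) ∧ (y : ℝ) < β) := fun h => hx h.1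
        simp [hA, hC]
        split_ifs <;> simp
      · have hB : ¬(α ≤ (y : ℝ) ∧ (z : ℝ) < β) := fun h => hz h.2
        simp [hB, hC]

/-- `Hom(M,N) ≠ {0}`: there is a nonzero morphism from `M` to `N`. -/
def HomNeZero (M N : PM) : Prop := ∃ F : PM.Hom M N, ∃ x, F.app x ≠ 0

/-- `S_{M,N} = {x ≥ 0 : Hom(M, N·x) ≠ {0}}`. -/
noncomputable def Sset (M N : PM) : Set ℝ :=
  {x : ℝ | 0 ≤ x ∧ HomNeZero M (N.shift x.toNNReal)}

/-- The canonical morphism `Π_M^{M·τ} : M → M·τ`. -/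
def PM.pi (M : PM) (τ : ℝ≥0) : M.Hom (M.shift τ) where
  app x := M.map le_self_add
  comm {x y} h := by
    show (M.map le_self_add).comp (M.map h) =
      (M.map (add_le_add_left h τ)).comp (M.map le_self_add)
    rw [M.map_comp, M.map_comp]

/-- The pair `(Φ, Ψ)` is an `ε`-interleaving between `M` and `N`:
`(Ψ·ε) ∘ Φ = Π_M^{M·2ε}` and `(Φ·ε) ∘ Ψ = Π_N^{N·2ε}` (expressed pointwise). -/
def IsInterleaving (M N : PM) (ε : ℝ≥0)
    (Φ : M.Hom (N.shift ε)) (Ψ : N.Hom (M.shift ε)) : Prop :=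
  (∀ x : ℝ≥0, (Ψ.app (x + ε)).comp (Φ.app x) =
      M.map (le_self_add.trans le_self_add : x ≤ x + ε + ε)) ∧
  (∀ x : ℝ≥0, (Φ.app (x + ε)).comp (Ψ.app x) =
      N.map (le_self_add.trans le_self_add : x ≤ x + ε + ε))

lemma mem_top' {α β : ℝ} {x : ℝ≥0} (h : α ≤ (x:ℝ) ∧ (x:ℝ) < β) (r : ℝ) :
    r ∈ intervalSub α β x := by simp [intervalSub, h]

lemma val_zero {α β : ℝ} {x : ℝ≥0} (h : ¬(α ≤ (x:ℝ) ∧ (x:ℝ) < β))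
    (v : ↥(intervalSub α β x)) : (v : ℝ) = 0 := by
  have h2 := v.2
  simp only [intervalSub, if_neg h, Submodule.mem_bot] at h2
  exact h2

lemma map_val {α β : ℝ} {x y : ℝ≥0} (h : x ≤ y) (v : ↥(intervalSub α β x)) :
    (show ↥(intervalSub α β y) from (intervalModule α β).map h v).1
      = (if α ≤ (x:ℝ) ∧ (y:ℝ) < β then 1 else 0) * (v:ℝ) := rfl

lemma shiftMap_val {γ δ : ℝ} {ε x y : ℝ≥0} (h : x ≤ y)
    (v : ((intervalModule γ δ).shift ε).V x) :
    (show ↥(intervalSub γ δ (y+ε)) from ((intervalModule γ δ).shift ε).map h v).1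
      = (if γ ≤ ((x+ε : ℝ≥0):ℝ) ∧ ((y+ε : ℝ≥0):ℝ) < δ then 1 else 0)
        * (show ↥(intervalSub γ δ (x+ε)) from v).1 := rfl

noncomputable def appF (α β γ δ : ℝ) (ε : ℝ≥0) (x : ℝ≥0) :
    ↥(intervalSub α β x) →ₗ[ℝ] ↥(intervalSub γ δ (x+ε)) :=
  LinearMap.codRestrict (intervalSub γ δ (x + ε))
    ((if (α ≤ (x:ℝ) ∧ (x:ℝ) < β) ∧ (γ ≤ (x:ℝ) + (ε:ℝ) ∧ (x:ℝ) + (ε:ℝ) < δ)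
        then (1:ℝ) else 0) • (intervalSub α β x).subtype)
    (by
      intro v
      by_cases hc : (α ≤ (x:ℝ) ∧ (x:ℝ) < β) ∧ (γ ≤ (x:ℝ) + (ε:ℝ) ∧ (x:ℝ) + (ε:ℝ) < δ)
      · apply mem_top'
        push_cast
        exact hc.2
      · simp [hc])

lemma appF_val {α β γ δ : ℝ} {ε x : ℝ≥0} (v : ↥(intervalSub α β x)) :
    (appF α β γ δ ε x v).1
      = (if (α ≤ (x:ℝ) ∧ (x:ℝ) < β) ∧ (γ ≤ (x:ℝ) + (ε:ℝ) ∧ (x:ℝ) + (ε:ℝ) < δ)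
          then (1:ℝ) else 0) * (v:ℝ) := rfl

noncomputable def homF (α β γ δ : ℝ) (ε : ℝ≥0) (hγ : γ ≤ α + ε) (hδ : δ ≤ β + ε) :
    PM.Hom (intervalModule α β) ((intervalModule γ δ).shift ε) where
  app x := appF α β γ δ ε x
  comm {x y} h := by
    ext v
    have hxy : (x:ℝ) ≤ (y:ℝ) := NNReal.coe_le_coe.mpr h
    refine Subtype.ext ?_
    show (appF α β γ δ ε y (((intervalModule α β).map h) v)).1
        = (show ↥(intervalSub γ δ (y+ε)) from
            ((intervalModule γ δ).shift ε).map h (appF α β γ δ ε x v)).1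
    erw [shiftMap_val, appF_val, appF_val]
    erw [map_val h v]
    by_cases hMx : α ≤ (x:ℝ) ∧ (x:ℝ) < β
    · by_cases hNy : γ ≤ (y:ℝ) + (ε:ℝ) ∧ (y:ℝ) + (ε:ℝ) < δ
      · have h1 : (α ≤ (y:ℝ) ∧ (y:ℝ) < β) ∧ (γ ≤ (y:ℝ) + (ε:ℝ) ∧ (y:ℝ) + (ε:ℝ) < δ) := by
          refine ⟨⟨le_trans hMx.1 hxy, by linarith [hNy.2]⟩, hNy⟩
        have h2 : α ≤ (x:ℝ) ∧ (y:ℝ) < β := ⟨hMx.1, h1.1.2⟩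
        have h3 : γ ≤ ((x+ε : ℝ≥0):ℝ) ∧ ((y+ε : ℝ≥0):ℝ) < δ := by
          push_cast; exact ⟨by linarith [hMx.1], hNy.2⟩
        have h4 : (α ≤ (x:ℝ) ∧ (x:ℝ) < β) ∧ (γ ≤ (x:ℝ) + (ε:ℝ) ∧ (x:ℝ) + (ε:ℝ) < δ) := by
          refine ⟨hMx, by linarith [hMx.1], by linarith [hNy.2, hxy]⟩
        rw [if_pos h1, if_pos h2, if_pos h3, if_pos h4]
      · -- codomain at y+ε is trivial: both sides are val of elements; show each is 0
        have hy' : ¬(γ ≤ ((y+ε : ℝ≥0):ℝ) ∧ ((y+ε : ℝ≥0):ℝ) < δ) := by push_cast; exact hNy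
        have e1 : ¬((α ≤ (y:ℝ) ∧ (y:ℝ) < β) ∧ (γ ≤ (y:ℝ) + (ε:ℝ) ∧ (y:ℝ) + (ε:ℝ) < δ)) :=
          fun hcon => hNy hcon.2
        have e2 : ¬(γ ≤ ((x+ε : ℝ≥0):ℝ) ∧ ((y+ε : ℝ≥0):ℝ) < δ) := by
          push_cast
          intro hcon
          exact hNy ⟨by linarith [hcon.1], hcon.2⟩
        rw [if_neg e1, if_neg e2]
        ring
    · have hv : (show ↥(intervalSub α β x) from v).1 = 0 := val_zero hMx v
      rw [hv]
      ring

lemma homExists (α β γ δ : ℝ) (ε : ℝ≥0) (hα : 0 ≤ α) (hαβ : α < β)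
    (hγ : γ ≤ α + ε) (hδ : δ ≤ β + ε) (hαδ : α + (ε:ℝ) < δ) :
    HomNeZero (intervalModule α β) ((intervalModule γ δ).shift ε) := by
  refine ⟨homF α β γ δ ε hγ hδ, α.toNNReal, ?_⟩
  intro h0
  have hx : (α.toNNReal : ℝ) = α := Real.coe_toNNReal α hα
  have hcond : (α ≤ (α.toNNReal:ℝ) ∧ (α.toNNReal:ℝ) < β) ∧
      (γ ≤ (α.toNNReal:ℝ) + (ε:ℝ) ∧ (α.toNNReal:ℝ) + (ε:ℝ) < δ) := by
    rw [hx]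
    exact ⟨⟨le_refl α, hαβ⟩, hγ, hαδ⟩
  have hone : (1:ℝ) ∈ intervalSub α β α.toNNReal := mem_top' hcond.1 1
  have h3 : (appF α β γ δ ε α.toNNReal ⟨1, hone⟩).1 = 0 := by
    have h4 := LinearMap.congr_fun h0
      (show (intervalModule α β).V α.toNNReal from ⟨1, hone⟩)
    have h5 := congrArg Subtype.val h4
    rw [LinearMap.zero_apply] at h5
    exact h5
  rw [appF_val, if_pos hcond, one_mul] at h3
  exact one_ne_zero h3

lemma noHomDisjoint (α β γ δ : ℝ) (ε : ℝ≥0)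
    (hdisj : ∀ x : ℝ≥0, (α ≤ (x:ℝ) ∧ (x:ℝ) < β) →
      ¬(γ ≤ (x:ℝ)+(ε:ℝ) ∧ (x:ℝ)+(ε:ℝ) < δ)) :
    ¬ HomNeZero (intervalModule α β) ((intervalModule γ δ).shift ε) := by
  rintro ⟨F, x, hx⟩
  apply hx
  ext v
  refine Subtype.ext ?_
  simp only [LinearMap.zero_apply, ZeroMemClass.coe_zero]
  by_cases hMx : α ≤ (x:ℝ) ∧ (x:ℝ) < β
  · have hN : ¬(γ ≤ ((x+ε:ℝ≥0):ℝ) ∧ ((x+ε:ℝ≥0):ℝ) < δ) := by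
      push_cast
      exact hdisj x hMx
    exact val_zero hN (show ↥(intervalSub γ δ (x+ε)) from F.app x v)
  · have hv : v = 0 :=
      Subtype.ext (val_zero hMx (show ↥(intervalSub α β x) from v))
    rw [hv, map_zero]

lemma noHomLow (α β γ δ : ℝ) (ε : ℝ≥0) (hα : 0 ≤ α) (hlt : α + (ε:ℝ) < γ) :
    ¬ HomNeZero (intervalModule α β) ((intervalModule γ δ).shift ε) := by
  rintro ⟨F, x, hx⟩
  apply hx
  ext v
  refine Subtype.ext ?_
  simp only [LinearMap.zero_apply, ZeroMemClass.coe_zero]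
  by_cases hMx : α ≤ (x:ℝ) ∧ (x:ℝ) < β
  · have hx0c : (α.toNNReal:ℝ) = α := Real.coe_toNNReal α hα
    have hx0x : α.toNNReal ≤ x := by
      rw [← NNReal.coe_le_coe, hx0c]
      exact hMx.1
    have hmem : ((show ↥(intervalSub α β x) from v) : ℝ) ∈ intervalSub α β α.toNNReal :=
      mem_top' ⟨by rw [hx0c], by rw [hx0c]; exact lt_of_le_of_lt hMx.1 hMx.2⟩ _
    have hw : (intervalModule α β).map hx0x
        (show ↥(intervalSub α β α.toNNReal) from ⟨_, hmem⟩) = v := by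
      refine Subtype.ext ?_
      rw [map_val hx0x]
      rw [if_pos ⟨by rw [hx0c], hMx.2⟩, one_mul]
    have h2 := LinearMap.congr_fun (F.comm hx0x)
      (show (intervalModule α β).V α.toNNReal from ⟨_, hmem⟩)
    rw [LinearMap.comp_apply, LinearMap.comp_apply, hw] at h2
    rw [h2, shiftMap_val]
    have h3 : (show ↥(intervalSub γ δ (α.toNNReal+ε)) from
        F.app α.toNNReal ⟨_, hmem⟩).1 = 0 := by
      refine val_zero ?_ _
      push_cast
      rw [hx0c]
      intro hcon
      linarith [hcon.1]
    rw [h3]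
    ring_nf
    rfl
  · have hv : v = 0 :=
      Subtype.ext (val_zero hMx (show ↥(intervalSub α β x) from v))
    rw [hv, map_zero]

lemma noHomHigh (α β γ δ : ℝ) (ε : ℝ≥0) (hβ : 0 ≤ β) (hlt : β + (ε:ℝ) < δ) :
    ¬ HomNeZero (intervalModule α β) ((intervalModule γ δ).shift ε) := by
  rintro ⟨F, x, hx⟩
  apply hx
  ext v
  refine Subtype.ext ?_
  simp only [LinearMap.zero_apply, ZeroMemClass.coe_zero]
  by_cases hMx : α ≤ (x:ℝ) ∧ (x:ℝ) < β
  · by_cases hNx : γ ≤ (x:ℝ)+(ε:ℝ) ∧ (x:ℝ)+(ε:ℝ) < δ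
    · have hyc : (β.toNNReal:ℝ) = β := Real.coe_toNNReal β hβ
      have hxy : x ≤ β.toNNReal := by
        rw [← NNReal.coe_le_coe, hyc]
        exact le_of_lt hMx.2
      have hmv : (intervalModule α β).map hxy v = 0 := by
        refine Subtype.ext ?_
        erw [map_val hxy]
        rw [if_neg (by rw [hyc]; exact fun hcon => lt_irrefl β hcon.2), zero_mul]
        rfl
      have h2 := LinearMap.congr_fun (F.comm hxy) v
      rw [LinearMap.comp_apply, LinearMap.comp_apply, hmv, map_zero] at h2
      have h3 := congrArg Subtype.val h2.symm
      erw [shiftMap_val hxy] at h3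
      rw [if_pos (by push_cast; rw [hyc]; exact ⟨hNx.1, hlt⟩), one_mul] at h3
      rw [h3]
      rfl
    · exact val_zero (by push_cast; exact hNx)
        (show ↥(intervalSub γ δ (x+ε)) from F.app x v)
  · have hv : v = 0 :=
      Subtype.ext (val_zero hMx (show ↥(intervalSub α β x) from v))
    rw [hv, map_zero]

theorem stmt16 (a b c d : ℝ) (ha : 0 ≤ a) (hac : a ≤ c) (hcb : c < b) (hbd : b ≤ d)
    (hab : a < b) (hcd : c < d) :
    Sset (intervalModule a b) (intervalModule c d) = Set.Ico (max (c - a) (d - b)) (d - a) ∧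
    Sset (intervalModule c d) (intervalModule a b) = Set.Ico 0 (b - c) := by
  constructor
  · ext ε
    simp only [Sset, Set.mem_setOf_eq, Set.mem_Ico]
    constructor
    · rintro ⟨hε0, hH⟩
      have hc : (ε.toNNReal : ℝ) = ε := Real.coe_toNNReal ε hε0
      refine ⟨max_le ?_ ?_, ?_⟩
      · by_contra hcon
        push_neg at hcon
        exact noHomLow a b c d ε.toNNReal ha (by rw [hc]; linarith) hH
      · by_contra hcon
        push_neg at hcon
        exact noHomHigh a b c d ε.toNNReal (by linarith) (by rw [hc]; linarith) hH
      · by_contra hcon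
        push_neg at hcon
        refine noHomDisjoint a b c d ε.toNNReal ?_ hH
        intro x hxM hxN
        rw [hc] at hxN
        linarith [hxM.1, hxN.2]
    · rintro ⟨h1, h2⟩
      have hca : (0:ℝ) ≤ max (c-a) (d-b) := le_trans (by linarith) (le_max_left _ _)
      have hε0 : 0 ≤ ε := le_trans hca h1
      have hc : (ε.toNNReal : ℝ) = ε := Real.coe_toNNReal ε hε0
      refine ⟨hε0, homExists a b c d ε.toNNReal ha hab ?_ ?_ ?_⟩
      · rw [hc]
        have := le_trans (le_max_left (c-a) (d-b)) h1
        linarith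
      · rw [hc]
        have := le_trans (le_max_right (c-a) (d-b)) h1
        linarith
      · rw [hc]
        linarith
  · ext ε
    simp only [Sset, Set.mem_setOf_eq, Set.mem_Ico]
    constructor
    · rintro ⟨hε0, hH⟩
      refine ⟨hε0, ?_⟩
      by_contra hcon
      push_neg at hcon
      have hc : (ε.toNNReal : ℝ) = ε := Real.coe_toNNReal ε hε0
      refine noHomDisjoint c d a b ε.toNNReal ?_ hH
      intro x hxN hxM
      rw [hc] at hxM
      linarith [hxN.1, hxM.2]
    · rintro ⟨hε0, h2⟩
      have hc : (ε.toNNReal : ℝ) = ε := Real.coe_toNNReal ε hε0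
      refine ⟨hε0, homExists c d a b ε.toNNReal (le_trans ha hac) hcd ?_ ?_ ?_⟩
      · rw [hc]; linarith
      · rw [hc]; linarith
      · rw [hc]; linarith
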